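/- arXiv:2411.13483 — 3 statements merged into one kernel-verified Lean document; each statement's English description precedes it below -/
import Mathlib

section
/- Let k be a positive integer and let S be an antidirected tree with at most k arcs whose underlying tree has diameter at most 4. Let D be a digraph with minimum pseudo-semidegree δ̄⁰(D) ≥ k/2 such that every orientation of the 4-cycle occurring as a subdigraph of D is a directed 4-cycle, and suppose Δ±(D) > Δ^tot(S). Then D contains S as a subdigraph. -/
open Finset

/-- The out-degree of a vertex in a digraph given by its arc relation `A`. -/
def outDeg {V : Type*} [Fintype V] (A : V → V → Prop) [DecidableRel A] (v : V) : ℕ :=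
  (Finset.univ.filter fun w => A v w).card

/-- The in-degree of a vertex in a digraph given by its arc relation `A`. -/
def inDeg {V : Type*} [Fintype V] (A : V → V → Prop) [DecidableRel A] (v : V) : ℕ :=
  (Finset.univ.filter fun w => A w v).card

/-- The number of arcs of a digraph. -/
def numArcs {V : Type*} [Fintype V] (A : V → V → Prop) [DecidableRel A] : ℕ :=
  (Finset.univ.filter fun p : V × V => A p.1 p.2).card

/-- The underlying simple graph of a digraph. -/
def underlying {V : Type*} (A : V → V → Prop) : SimpleGraph V where
  Adj x y := x ≠ y ∧ (A x y ∨ A y x)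
  symm := ⟨fun x y h => ⟨h.1.symm, h.2.symm⟩⟩
  loopless := ⟨fun x h => h.1 rfl⟩

/-- The total degree of a vertex: its degree in the underlying undirected graph. -/
def totDeg {V : Type*} [Fintype V] [DecidableEq V] (A : V → V → Prop) [DecidableRel A]
    (v : V) : ℕ :=
  (Finset.univ.filter fun w => w ≠ v ∧ (A v w ∨ A w v)).card

/-- `A` is an oriented tree: an orientation of a (finite) tree. In particular there
is at most one arc between any two vertices, and the underlying graph is a tree. -/
def IsOrientedTree {V : Type*} (A : V → V → Prop) : Prop :=
  (∀ x y, ¬ (A x y ∧ A y x)) ∧ (underlying A).IsTree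

/-- A digraph is antidirected if every vertex has in-degree 0 or out-degree 0. -/
def IsAntidirected {V : Type*} (A : V → V → Prop) : Prop :=
  ∀ v, (∀ u, ¬ A u v) ∨ (∀ u, ¬ A v u)

/-- `D` (with arc relation `AD`) contains `T` (with arc relation `AT`) as a
subdigraph: there is an injective map of vertices sending arcs to arcs. -/
def Contains {VT VD : Type*} (AT : VT → VT → Prop) (AD : VD → VD → Prop) : Prop :=
  ∃ f : VT → VD, Function.Injective f ∧ ∀ x y, AT x y → AD (f x) (f y)

/-- No orientation of the 4-cycle occurs as a subdigraph. -/
def C4Free {V : Type*} (A : V → V → Prop) : Prop :=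
  ∀ a b c d : V, a ≠ b → a ≠ c → a ≠ d → b ≠ c → b ≠ d → c ≠ d →
    ¬ ((A a b ∨ A b a) ∧ (A b c ∨ A c b) ∧ (A c d ∨ A d c) ∧ (A d a ∨ A a d))

/-- An arc between `x` and `y` in the direction given by `e`. -/
def dirArc {V : Type*} (A : V → V → Prop) (x y : V) : Bool → Prop
  | true => A x y
  | false => A y x

/-- Every orientation of the 4-cycle occurring as a subdigraph is a directed
4-cycle (i.e. all four arcs are oriented the same way around the cycle). -/
def C4StarFree {V : Type*} (A : V → V → Prop) : Prop :=
  ∀ a b c d : V, a ≠ b → a ≠ c → a ≠ d → b ≠ c → b ≠ d → c ≠ d →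
    ∀ e1 e2 e3 e4 : Bool,
      dirArc A a b e1 → dirArc A b c e2 → dirArc A c d e3 → dirArc A d a e4 →
      e1 = e2 ∧ e2 = e3 ∧ e3 = e4

/-- `A` is an out-arborescence with root `r`: an oriented tree all of whose arcs
point away from the root. -/
def IsOutArborescence {V : Type*} (A : V → V → Prop) (r : V) : Prop :=
  IsOrientedTree A ∧
    ∀ x y, A x y → (underlying A).dist r y = (underlying A).dist r x + 1

section Helpers

lemma exists_injOn_of_card_le' {α β : Type*} [DecidableEq α] [DecidableEq β] [Nonempty β]
    (s : Finset α) (t : Finset β) (h : s.card ≤ t.card) :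
    ∃ f : α → β, Set.InjOn f ↑s ∧ ∀ a ∈ s, f a ∈ t := by
  classical
  induction s using Finset.induction generalizing t with
  | empty => exact ⟨fun _ => Classical.arbitrary β, by simp, by simp⟩
  | insert a s ha ih =>
    rw [Finset.card_insert_of_notMem ha] at h
    have htne : t.Nonempty := Finset.card_pos.mp (by omega)
    obtain ⟨b, hb⟩ := htne
    have hcard : s.card ≤ (t.erase b).card := by
      rw [Finset.card_erase_of_mem hb]; omega
    obtain ⟨f, hf1, hf2⟩ := ih (t.erase b) hcard
    refine ⟨Function.update f a b, ?_, ?_⟩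
    · intro x hx y hy hxy
      simp only [Finset.coe_insert, Set.mem_insert_iff] at hx hy
      have key : ∀ z, z ∈ s → Function.update f a b z ∈ t.erase b := by
        intro z hz
        rw [Function.update_of_ne (fun h => ha (by rw [← h]; exact hz))]
        exact hf2 z hz
      rcases hx with hx | hx
      · rcases hy with hy | hy
        · rw [hx, hy]
        · exfalso; have hm := key y hy; rw [← hxy, hx, Function.update_self] at hm
          exact Finset.notMem_erase b t hm
      · rcases hy with hy | hy
        · exfalso; have hm := key x hx; rw [hxy, hy, Function.update_self] at hm
          exact Finset.notMem_erase b t hm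
        · have hx' : x ≠ a := fun h => ha (by rw [← h]; exact hx)
          have hy' : y ≠ a := fun h => ha (by rw [← h]; exact hy)
          rw [Function.update_of_ne hx', Function.update_of_ne hy'] at hxy
          exact hf1 hx hy hxy
    · intro x hx
      rcases Finset.mem_insert.mp hx with hx | hx
      · rw [hx, Function.update_self]; exact hb
      · rw [Function.update_of_ne (fun h => ha (by rw [← h]; exact hx))]
        exact Finset.mem_of_mem_erase (hf2 x hx)


section TreeLemmas
open SimpleGraph
variable {V : Type*} {G : SimpleGraph V}

lemma tree_path_length (hT : G.IsTree) {u v : V} {p : G.Walk u v} (hp : p.IsPath) :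
    p.length = G.dist u v := by
  obtain ⟨q, hq, hlen⟩ := hT.isConnected.exists_path_of_dist u v
  obtain ⟨r, -, hun⟩ := hT.existsUnique_path u v
  rw [hun p hp, ← hun q hq, hlen]

lemma dist_getVert_le (hc : G.Connected) {u v : V} (p : G.Walk u v) (i : ℕ) :
    G.dist u (p.getVert i) ≤ i := by
  induction p generalizing i with
  | nil => simp [Walk.getVert, SimpleGraph.dist_self]
  | cons h q ih =>
    cases i with
    | zero => simp
    | succ n =>
      rw [Walk.getVert_cons_succ]
      calc G.dist _ _ ≤ G.dist _ _ + G.dist _ (q.getVert n) := hc.dist_triangle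
        _ ≤ 1 + n := by
            gcongr
            · exact le_trans (G.dist_le (Walk.cons h Walk.nil)) (by simp)
            · exact ih n
        _ = n + 1 := by omega

lemma getVert_one_takeUntil [DecidableEq V] {u v z : V} (p : G.Walk u v) (h : z ∈ p.support)
    (hz : z ≠ u) : (p.takeUntil z h).getVert 1 = p.getVert 1 := by
  have hs := p.take_spec h
  have hlen : (p.takeUntil z h).length ≠ 0 :=
    fun h0 => hz (SimpleGraph.Walk.eq_of_length_eq_zero h0).symm
  conv_rhs => rw [← hs]
  rw [SimpleGraph.Walk.getVert_append]
  split_ifs with hlt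
  · rfl
  · have h1 : (p.takeUntil z h).length = 1 := by omega
    rw [h1]
    simp only [Nat.sub_self, SimpleGraph.Walk.getVert_zero]
    conv_lhs => rw [← h1]
    rw [SimpleGraph.Walk.getVert_length]

lemma tree_split (hT : G.IsTree) {m x y z : V} (P : G.Walk m x) (Q : G.Walk m y)
    (hP : P.IsPath) (hQ : Q.IsPath) (hne : P.getVert 1 ≠ Q.getVert 1)
    (hzP : z ∈ P.support) (hzQ : z ∈ Q.support) : z = m := by
  classical
  by_contra hz
  obtain ⟨r, -, hun⟩ := hT.existsUnique_path m z
  have he : P.takeUntil z hzP = Q.takeUntil z hzQ := by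
    rw [hun _ (hP.takeUntil hzP), hun _ (hQ.takeUntil hzQ)]
  apply hne
  rw [← getVert_one_takeUntil P hzP hz, ← getVert_one_takeUntil Q hzQ hz, he]

lemma reverse_append_path {m x y : V} {P : G.Walk m x} {Q : G.Walk m y}
    (hP : P.IsPath) (hQ : Q.IsPath)
    (hdisj : ∀ z, z ∈ P.support → z ∈ Q.support → z = m) :
    (P.reverse.append Q).IsPath := by
  rw [SimpleGraph.Walk.isPath_def, SimpleGraph.Walk.support_append, List.nodup_append]
  refine ⟨hP.reverse.support_nodup, hQ.support_nodup.tail, ?_⟩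
  intro a haP b haQ hab
  subst hab
  have haP' : a ∈ P.support := by
    rwa [SimpleGraph.Walk.support_reverse, List.mem_reverse] at haP
  have haQ' : a ∈ Q.support := List.mem_of_mem_tail haQ
  have := hdisj a haP' haQ'
  subst this
  have : Q.support = a :: Q.support.tail := Q.support_eq_cons
  have hnd := hQ.support_nodup
  rw [this] at hnd
  exact (List.nodup_cons.mp hnd).1 haQ

lemma exists_center [Fintype V] (hT : G.IsTree) (hdiam : ∀ x y, G.dist x y ≤ 4) :
    ∃ c : V, ∀ w, G.dist c w ≤ 2 := by
  classical
  have hconn := hT.isConnected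
  have hne : Nonempty V := hconn.nonempty
  obtain ⟨x0⟩ := hne
  obtain ⟨⟨u, v⟩, -, hmax⟩ := Finset.exists_max_image (Finset.univ ×ˢ Finset.univ)
    (fun p => G.dist p.1 p.2) ⟨(x0, x0), by simp⟩
  simp only [Finset.mem_product, Finset.mem_univ, and_self, true_implies] at hmax
  have hmax' : ∀ x y : V, G.dist x y ≤ G.dist u v := fun x y => hmax (x, y)
  set D := G.dist u v with hD
  by_cases hD2 : D ≤ 2
  · exact ⟨u, fun w => le_trans (hmax' u w) hD2⟩
  push_neg at hD2
  have hD4 : D ≤ 4 := hdiam u v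
  obtain ⟨p, hp, hlen⟩ := hconn.exists_path_of_dist u v
  set m := p.getVert 2 with hm
  have hum : G.dist u m ≤ 2 := dist_getVert_le hconn p 2
  have hmv : G.dist v m ≤ D - 2 := by
    have hh := dist_getVert_le hconn p.reverse (D - 2)
    rw [SimpleGraph.Walk.getVert_reverse] at hh
    have h2 : p.length - (D - 2) = 2 := by rw [hlen, ← hD]; omega
    rwa [h2] at hh
  have htri : D ≤ G.dist u m + G.dist m v := hconn.dist_triangle
  have hcomm : G.dist v m = G.dist m v := SimpleGraph.dist_comm ..
  have hum2 : G.dist u m = 2 := by omega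
  have hmv2 : G.dist m v = D - 2 := by omega
  obtain ⟨P1, hP1, hP1len⟩ := hconn.exists_path_of_dist m u
  obtain ⟨P2, hP2, hP2len⟩ := hconn.exists_path_of_dist m v
  rw [SimpleGraph.dist_comm] at hP1len
  rw [hum2] at hP1len
  rw [hmv2] at hP2len
  -- second vertices differ
  have hsecond : P1.getVert 1 ≠ P2.getVert 1 := by
    intro he
    have hCpath : (P1.reverse.append P2).IsPath := by
      apply SimpleGraph.Walk.isPath_of_length_eq_dist
      rw [SimpleGraph.Walk.length_append, SimpleGraph.Walk.length_reverse, hP1len, hP2len]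
      omega
    have hz1 : P1.getVert 1 ∈ P1.support :=
      SimpleGraph.Walk.mem_support_iff_exists_getVert.mpr ⟨1, rfl, by omega⟩
    have hz2 : P2.getVert 1 ∈ P2.support :=
      SimpleGraph.Walk.mem_support_iff_exists_getVert.mpr ⟨1, rfl, by omega⟩
    have hzm : P1.getVert 1 ≠ m := by
      have hadj : G.Adj m (P1.getVert 1) := by
        have := P1.adj_getVert_succ (i := 0) (by omega)
        simpa using this
      exact fun h => G.irrefl (h ▸ hadj)
    have hnd := hCpath.support_nodup
    rw [SimpleGraph.Walk.support_append, List.nodup_append] at hnd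
    have hin1 : P1.getVert 1 ∈ P1.reverse.support := by
      rw [SimpleGraph.Walk.support_reverse, List.mem_reverse]; exact hz1
    have hin2 : P1.getVert 1 ∈ P2.support.tail := by
      rw [he] at hzm ⊢
      have hz2' := hz2
      rw [P2.support_eq_cons] at hz2'
      rcases List.mem_cons.mp hz2' with h | h
      · exact absurd h hzm
      · exact h
    exact hnd.2.2 _ hin1 _ hin2 rfl
  refine ⟨m, fun w => ?_⟩
  by_contra hL
  push_neg at hL
  obtain ⟨Q, hQ, hQlen⟩ := hconn.exists_path_of_dist m w
  have hQ3 : 3 ≤ Q.length := by omega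
  have hcases : Q.getVert 1 ≠ P1.getVert 1 ∨ Q.getVert 1 ≠ P2.getVert 1 := by
    by_contra hcc
    push_neg at hcc
    exact hsecond (hcc.1 ▸ hcc.2 ▸ rfl)
  rcases hcases with hc1 | hc1
  · have hdisj : ∀ z, z ∈ P1.support → z ∈ Q.support → z = m :=
      fun z hz1 hz2 => tree_split hT P1 Q hP1 hQ (fun h => hc1 h.symm) hz1 hz2
    have hCpath : (P1.reverse.append Q).IsPath := reverse_append_path hP1 hQ hdisj
    have := tree_path_length hT hCpath
    rw [SimpleGraph.Walk.length_append, SimpleGraph.Walk.length_reverse, hP1len] at this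
    have := hdiam u w
    omega
  · have hdisj : ∀ z, z ∈ P2.support → z ∈ Q.support → z = m :=
      fun z hz1 hz2 => tree_split hT P2 Q hP2 hQ (fun h => hc1 h.symm) hz1 hz2
    have hCpath : (P2.reverse.append Q).IsPath := reverse_append_path hP2 hQ hdisj
    have := tree_path_length hT hCpath
    rw [SimpleGraph.Walk.length_append, SimpleGraph.Walk.length_reverse, hP2len] at this
    have := hmax' v w
    omega

end TreeLemmas

section Dfacts
variable {VD : Type*} {AD : VD → VD → Prop}

lemma arc_ne (hDloopless : ∀ v : VD, ¬ AD v v) {x y : VD} (h : AD x y) : x ≠ y :=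
  fun he => hDloopless y (he ▸ h)

/-- F1: two distinct out-neighbours of `a` have no common in-neighbour besides `a`. -/
lemma F1' (hDloopless : ∀ v : VD, ¬ AD v v) (hC4 : C4StarFree AD)
    {a u u' z : VD} (hau : AD a u) (hau' : AD a u') (huu : u ≠ u')
    (hzu : AD z u) (hzu' : AD z u') : z = a := by
  by_contra hza
  have h := hC4 a u z u' (arc_ne hDloopless hau) (Ne.symm hza) (arc_ne hDloopless hau')
    (Ne.symm (arc_ne hDloopless hzu)) huu (arc_ne hDloopless hzu')
    true false true false hau hzu hzu' hau'
  simp at h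

/-- PARTNER: an out-neighbour `u` of `a` has at most one "partner" among
the out-neighbours of `a`. -/
lemma partner' (hDloopless : ∀ v : VD, ¬ AD v v) (hC4 : C4StarFree AD)
    {a u v w : VD} (hau : AD a u) (hav : AD a v) (haw : AD a w)
    (huv : u ≠ v) (huw : u ≠ w) (hvw : v ≠ w)
    (h1 : AD v u ∨ AD u v) (h2 : AD w u ∨ AD u w) : False := by
  obtain ⟨e2, harc2⟩ : ∃ e, dirArc AD v u e := by
    rcases h1 with h | h
    · exact ⟨true, h⟩
    · exact ⟨false, h⟩
  obtain ⟨e3, harc3⟩ : ∃ e, dirArc AD u w e := by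
    rcases h2 with h | h
    · exact ⟨false, h⟩
    · exact ⟨true, h⟩
  have h := hC4 a v u w (arc_ne hDloopless hav) (arc_ne hDloopless hau)
    (arc_ne hDloopless haw) (Ne.symm huv) hvw huw
    true e2 e3 false hav harc2 harc3 haw
  obtain ⟨q1, q2, q3⟩ := h
  rw [← q2, ← q1] at q3
  simp at q3
end Dfacts

section SdiffLemmas
variable {VD : Type*} [Fintype VD] [DecidableEq VD] {AD : VD → VD → Prop} [DecidableRel AD]

lemma sdiff_card_ge_two (hDloopless : ∀ v : VD, ¬ AD v v) (hC4 : C4StarFree AD)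
    (a u : VD) (T : Finset VD) (hT : ∀ v ∈ T, AD a v) (hu : AD a u) :
    inDeg AD u - 2 ≤ ((Finset.univ.filter fun w => AD w u) \ insert a T).card := by
  set s := Finset.univ.filter fun w => AD w u with hs
  have hkey : (s ∩ insert a T).card ≤ 2 := by
    by_cases hne : ((s ∩ insert a T).erase a).Nonempty
    · obtain ⟨z1, hz1⟩ := hne
      obtain ⟨hz1a, hz1m⟩ := Finset.mem_erase.mp hz1
      have hz1arc : AD z1 u := (Finset.mem_filter.mp (Finset.mem_inter.mp hz1m).1).2
      have hz1T : z1 ∈ T := by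
        rcases Finset.mem_insert.mp (Finset.mem_inter.mp hz1m).2 with h | h
        · exact absurd h hz1a
        · exact h
      have hsub : s ∩ insert a T ⊆ insert a {z1} := by
        intro z hz
        by_cases hza : z = a
        · simp [hza]
        · have hzarc : AD z u := (Finset.mem_filter.mp (Finset.mem_inter.mp hz).1).2
          have hzT : z ∈ T := by
            rcases Finset.mem_insert.mp (Finset.mem_inter.mp hz).2 with h | h
            · exact absurd h hza
            · exact h
          by_cases hzz : z = z1
          · simp [hzz]
          · exact absurd (partner' hDloopless hC4 hu (hT z hzT) (hT z1 hz1T)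
              (Ne.symm (arc_ne hDloopless hzarc)) (Ne.symm (arc_ne hDloopless hz1arc)) hzz
              (Or.inl hzarc) (Or.inl hz1arc)) not_false
      calc (s ∩ insert a T).card ≤ (insert a ({z1} : Finset VD)).card := Finset.card_le_card hsub
        _ ≤ 2 := le_trans (Finset.card_insert_le _ _) (by simp)
    · have hsub : s ∩ insert a T ⊆ {a} := by
        intro z hz
        rw [Finset.mem_singleton]
        by_contra hza
        exact hne ⟨z, Finset.mem_erase.mpr ⟨hza, hz⟩⟩
      calc (s ∩ insert a T).card ≤ 1 := le_trans (Finset.card_le_card hsub) (by simp)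
        _ ≤ 2 := by omega
  have hsplit := Finset.card_sdiff_add_card_inter s (insert a T)
  have hdeg : inDeg AD u = s.card := rfl
  omega

lemma sdiff_card_ge_one (hDloopless : ∀ v : VD, ¬ AD v v)
    (a u : VD) (T : Finset VD) (hprot : ∀ v ∈ T, ¬ AD v u) :
    inDeg AD u - 1 ≤ ((Finset.univ.filter fun w => AD w u) \ insert a T).card := by
  set s := Finset.univ.filter fun w => AD w u with hs
  have hsub : s ∩ insert a T ⊆ {a} := by
    intro z hz
    rw [Finset.mem_singleton]
    have hzarc : AD z u := (Finset.mem_filter.mp (Finset.mem_inter.mp hz).1).2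
    rcases Finset.mem_insert.mp (Finset.mem_inter.mp hz).2 with h | h
    · exact h
    · exact absurd hzarc (hprot z h)
  have hkey : (s ∩ insert a T).card ≤ 1 := le_trans (Finset.card_le_card hsub) (by simp)
  have hsplit := Finset.card_sdiff_add_card_inter s (insert a T)
  have hdeg : inDeg AD u = s.card := rfl
  omega

end SdiffLemmas

set_option maxHeartbeats 1000000 in
theorem aux {VS VD : Type*} [Fintype VS] [DecidableEq VS] [Fintype VD]
    (AS : VS → VS → Prop) [DecidableRel AS] (AD : VD → VD → Prop) [DecidableRel AD]
    (k : ℕ) (hk : 0 < k)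
    (hS : IsOrientedTree AS) (hSanti : IsAntidirected AS) (hSarcs : numArcs AS ≤ k)
    (hDloopless : ∀ v : VD, ¬ AD v v)
    (hDarcs : ∃ x y : VD, AD x y)
    (hpseudo : ∀ v : VD, (0 < outDeg AD v → k ≤ 2 * outDeg AD v) ∧
      (0 < inDeg AD v → k ≤ 2 * inDeg AD v))
    (hC4 : C4StarFree AD)
    (hΔout : ∃ a : VD, ∀ s : VS, totDeg AS s < outDeg AD a)
    (hΔin : ∃ b : VD, ∀ s : VS, totDeg AS s < inDeg AD b)
    (c : VS) (hecc : ∀ v, (underlying AS).dist c v ≤ 2)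
    (hsrc : ∀ u, ¬ AS u c) :
    Contains AS AD := by
  classical
  obtain ⟨w0, w0', hw0⟩ := hDarcs
  have hVDne : Nonempty VD := ⟨w0⟩
  have hT := hS.2
  have hconn := hT.isConnected
  have noloop : ∀ v, ¬ AS v v := fun v h => hS.1 v v ⟨h, h⟩
  have hone : ∀ {x y : VS}, AS x y → (underlying AS).Adj x y :=
    fun {x y} h => ⟨fun he => noloop y (he ▸ h), Or.inl h⟩
  have hXadj : ∀ {v : VS}, (underlying AS).Adj c v ↔ AS c v := by
    intro v
    constructor
    · rintro ⟨hne, h | h⟩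
      · exact h
      · exact absurd h (hsrc v)
    · exact hone
  have hdist01 : ∀ v : VS, v = c ∨ AS c v ∨ (underlying AS).dist c v = 2 := by
    intro v
    have h := hecc v
    have h3 : (underlying AS).dist c v = 0 ∨ (underlying AS).dist c v = 1 ∨
        (underlying AS).dist c v = 2 := by omega
    rcases h3 with h3 | h3 | h3
    · exact Or.inl ((hconn.dist_eq_zero_iff.mp h3).symm)
    · exact Or.inr (Or.inl (hXadj.mp (SimpleGraph.dist_eq_one_iff_adj.mp h3)))
    · exact Or.inr (Or.inr h3)
  have hcadj : ∀ {v : VS}, AS c v → v ≠ c := fun {v} h he => noloop c (he ▸ h)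
  -- S2 : structure of distance-2 vertices
  have S2 : ∀ y, (underlying AS).dist c y = 2 →
      ∃ x, AS c x ∧ AS y x ∧ ∀ z, (underlying AS).Adj z y → z = x := by
    intro y hy
    have hcy : c ≠ y := by
      rintro rfl
      rw [SimpleGraph.dist_self] at hy
      omega
    obtain ⟨Q, hQ, hQlen⟩ := hconn.exists_path_of_dist c y
    rw [hy] at hQlen
    set x := Q.getVert 1 with hx
    have hadj1 : (underlying AS).Adj c x := by
      have h := Q.adj_getVert_succ (i := 0) (by omega)
      simpa using h
    have hadj2 : (underlying AS).Adj x y := by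
      have h := Q.adj_getVert_succ (i := 1) (by omega)
      have h2 : Q.getVert 2 = y := by
        conv_lhs => rw [← hQlen]
        exact Q.getVert_length
      rwa [h2] at h
    have hAScx : AS c x := hXadj.mp hadj1
    have hASyx : AS y x := by
      rcases hadj2.2 with h | h
      · exfalso
        rcases hSanti x with h1 | h1
        · exact h1 c hAScx
        · exact h1 y h
      · exact h
    refine ⟨x, hAScx, hASyx, ?_⟩
    intro z hzy
    have hzc : z ≠ c := by
      intro hcz
      have : (underlying AS).dist c y = 1 := SimpleGraph.dist_eq_one_iff_adj.mpr (hcz ▸ hzy)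
      omega
    have hzadjc : (underlying AS).Adj c z := by
      rcases hdist01 z with h | h | h
      · exact absurd h hzc
      · exact hone h
      · exfalso
        obtain ⟨R, hR, hRlen⟩ := hconn.exists_path_of_dist c z
        rw [h] at hRlen
        by_cases hyR : y ∈ R.support
        · obtain ⟨i, hig, hile⟩ := SimpleGraph.Walk.mem_support_iff_exists_getVert.mp hyR
          rw [hRlen] at hile
          interval_cases i
          · rw [R.getVert_zero] at hig
            exact hcy hig
          · have hadj : (underlying AS).Adj c (R.getVert 1) := by
              have h := R.adj_getVert_succ (i := 0) (by omega)
              simpa using h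
            rw [hig] at hadj
            have : (underlying AS).dist c y = 1 := SimpleGraph.dist_eq_one_iff_adj.mpr hadj
            omega
          · have h2 : R.getVert 2 = z := by
              conv_lhs => rw [← hRlen]
              exact R.getVert_length
            rw [h2] at hig
            exact (underlying AS).irrefl (hig ▸ hzy)
        · have hW : (R.append (SimpleGraph.Walk.cons hzy SimpleGraph.Walk.nil)).IsPath := by
            rw [SimpleGraph.Walk.isPath_def, SimpleGraph.Walk.support_append]
            rw [List.nodup_append]
            refine ⟨hR.support_nodup, ?_, ?_⟩
            · simp
            · intro b hb1 b' hb2 hbb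
              subst hbb
              simp only [SimpleGraph.Walk.support_cons, SimpleGraph.Walk.support_nil,
                List.tail_cons, List.mem_singleton] at hb2
              rw [hb2] at hb1
              exact hyR hb1
          have hlen := tree_path_length hT hW
          rw [SimpleGraph.Walk.length_append, hRlen] at hlen
          simp only [SimpleGraph.Walk.length_cons, SimpleGraph.Walk.length_nil] at hlen
          omega
    -- now z is adjacent to both c and y; use path uniqueness
    have hzy' : z ≠ y := hzy.ne
    have hW1 : (SimpleGraph.Walk.cons hzadjc (SimpleGraph.Walk.cons hzy
        SimpleGraph.Walk.nil) : (underlying AS).Walk c y).IsPath := by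
      rw [SimpleGraph.Walk.isPath_def]
      simp only [SimpleGraph.Walk.support_cons, SimpleGraph.Walk.support_nil, List.nodup_cons,
        List.mem_cons, List.mem_singleton, List.not_mem_nil, List.nodup_nil, and_true,
        not_or, List.mem_nil_iff, or_false]
      exact ⟨⟨hzadjc.ne, hcy⟩, hzy', not_false⟩
    obtain ⟨r, -, hun⟩ := hT.existsUnique_path c y
    have he : (SimpleGraph.Walk.cons hzadjc (SimpleGraph.Walk.cons hzy
        SimpleGraph.Walk.nil) : (underlying AS).Walk c y) = Q := by
      rw [hun _ hW1, hun Q hQ]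
    have := congrArg (fun w => SimpleGraph.Walk.getVert w 1) he
    simpa using this
  -- A2 : classification of arcs not out of c
  have A2 : ∀ p q, AS p q → p ≠ c → AS c q ∧ (∀ q', AS p q' → q' = q) ∧ ¬ AS c p := by
    intro p q hpq hpc
    have hpnx : ¬ AS c p := by
      intro hcp
      rcases hSanti p with h1 | h1
      · exact h1 c hcp
      · exact h1 q hpq
    rcases hdist01 p with h | h | h
    · exact absurd h hpc
    · exact absurd h hpnx
    · obtain ⟨x, hcx, hpx, huniq⟩ := S2 p h
      have hq : q = x := huniq q (hone hpq).symm
      subst hq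
      exact ⟨hcx, fun q' hq' => huniq q' (hone hq').symm, hpnx⟩
  set Xs : Finset VS := Finset.univ.filter (fun v => AS c v) with hXs
  set Yx : VS → Finset VS := fun x => Finset.univ.filter (fun y => AS y x ∧ y ≠ c) with hYx
  have hmemXs : ∀ {v : VS}, v ∈ Xs ↔ AS c v := by
    intro v; rw [hXs]; simp
  have hmemYx : ∀ {x y : VS}, y ∈ Yx x ↔ AS y x ∧ y ≠ c := by
    intro x y; rw [hYx]; simp
  have hYx_empty : ∀ x, x ∉ Xs → Yx x = ∅ := by
    intro x hx
    rw [Finset.eq_empty_iff_forall_notMem]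
    intro y hy
    obtain ⟨h1, h2⟩ := hmemYx.mp hy
    exact hx (hmemXs.mpr (A2 y x h1 h2).1)
  have hcYx : ∀ x, c ∉ Yx x := fun x hc => (hmemYx.mp hc).2 rfl
  -- counting
  have hnum : Xs.card + ∑ x ∈ Xs, (Yx x).card ≤ k := by
    have h1 : numArcs AS = ∑ q : VS, (Finset.univ.filter (fun w => AS w q)).card := by
      show (Finset.univ.filter fun p : VS × VS => AS p.1 p.2).card = _
      rw [Finset.card_eq_sum_card_fiberwise
        (f := fun p : VS × VS => p.2) (t := Finset.univ) (fun p _ => Finset.mem_univ _)]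
      apply Finset.sum_congr rfl
      intro q _
      apply Finset.card_bij (fun p _ => p.1)
      · intro p hp
        simp only [Finset.mem_filter, Finset.mem_univ, true_and] at hp ⊢
        rw [hp.2] at hp
        exact hp.1
      · intro p1 hp1 p2 hp2 he
        simp only [Finset.mem_filter] at hp1 hp2
        exact Prod.ext he (hp1.2.trans hp2.2.symm)
      · intro w hw
        simp only [Finset.mem_filter, Finset.mem_univ, true_and] at hw ⊢
        exact ⟨(w, q), ⟨hw, rfl⟩, rfl⟩
    have h3 : ∀ x ∈ Xs, (Finset.univ.filter (fun w => AS w x)).card = (Yx x).card + 1 := by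
      intro x hx
      have hxc : AS c x := hmemXs.mp hx
      have he : Finset.univ.filter (fun w => AS w x) = insert c (Yx x) := by
        ext w
        simp only [Finset.mem_filter, Finset.mem_univ, true_and, Finset.mem_insert]
        rw [hYx]
        simp only [Finset.mem_filter, Finset.mem_univ, true_and]
        constructor
        · intro hw
          by_cases hwc : w = c
          · exact Or.inl hwc
          · exact Or.inr ⟨hw, hwc⟩
        · rintro (rfl | ⟨h1, -⟩)
          · exact hxc
          · exact h1
      rw [he, Finset.card_insert_of_notMem (hcYx x), hYx]
    have h2 : ∑ x ∈ Xs, (Finset.univ.filter (fun w => AS w x)).card ≤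
        ∑ q : VS, (Finset.univ.filter (fun w => AS w q)).card :=
      Finset.sum_le_sum_of_subset (Finset.subset_univ Xs)
    have h4 : ∑ x ∈ Xs, (Finset.univ.filter (fun w => AS w x)).card
        = ∑ x ∈ Xs, ((Yx x).card + 1) := Finset.sum_congr rfl h3
    rw [Finset.sum_add_distrib, Finset.sum_const, smul_eq_mul, mul_one] at h4
    omega
  -- total degrees
  have htotc : totDeg AS c = Xs.card := by
    show (Finset.univ.filter fun w => w ≠ c ∧ (AS c w ∨ AS w c)).card = Xs.card
    congr 1
    ext w
    simp only [Finset.mem_filter, Finset.mem_univ, true_and]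
    rw [hmemXs]
    constructor
    · rintro ⟨h1, h2 | h2⟩
      · exact h2
      · exact absurd h2 (hsrc w)
    · intro h
      exact ⟨hcadj h, Or.inl h⟩
  have htotx : ∀ x ∈ Xs, totDeg AS x = (Yx x).card + 1 := by
    intro x hx
    have hxc : AS c x := hmemXs.mp hx
    have hxout : ∀ u, ¬ AS x u := by
      rcases hSanti x with h1 | h1
      · exact absurd hxc (h1 c)
      · exact h1
    show (Finset.univ.filter fun w => w ≠ x ∧ (AS x w ∨ AS w x)).card = _
    have he : (Finset.univ.filter fun w => w ≠ x ∧ (AS x w ∨ AS w x)) = insert c (Yx x) := by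
      ext w
      simp only [Finset.mem_filter, Finset.mem_univ, true_and, Finset.mem_insert]
      rw [hmemYx]
      constructor
      · rintro ⟨h1, h2 | h2⟩
        · exact absurd h2 (hxout w)
        · by_cases hwc : w = c
          · exact Or.inl hwc
          · exact Or.inr ⟨h2, hwc⟩
      · rintro (rfl | ⟨h1, h2⟩)
        · exact ⟨(hcadj hxc).symm, Or.inr hxc⟩
        · exact ⟨fun he => noloop x (he ▸ h1), Or.inr h1⟩
    rw [he, Finset.card_insert_of_notMem (hcYx x)]
  -- MAIN assembly lemma
  have MAIN : ∀ (a : VD) (g : VS → VD), Set.InjOn g ↑Xs → (∀ x ∈ Xs, AD a (g x)) →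
      (∀ x ∈ Xs, (Yx x).card ≤
        ((Finset.univ.filter fun w => AD w (g x)) \ insert a (Xs.image g)).card) →
      Contains AS AD := by
    intro a g hginj hgarc hgcard
    have hinj : ∀ x : VS, ∃ h : VS → VD, Set.InjOn h ↑(Yx x) ∧
        ∀ y ∈ Yx x, h y ∈ (Finset.univ.filter fun w => AD w (g x)) \ insert a (Xs.image g) := by
      intro x
      by_cases hx : x ∈ Xs
      · exact exists_injOn_of_card_le' _ _ (hgcard x hx)
      · rw [hYx_empty x hx]
        exact ⟨fun _ => Classical.arbitrary VD, by simp, by simp⟩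
    choose ℓ hℓ1 hℓ2 using hinj
    have hpar0 : ∀ p : VS, p ≠ c → ¬ AS c p → ∃ q, AS p q := by
      intro p h1 h2
      rcases hdist01 p with h | h | h
      · exact absurd h h1
      · exact absurd h h2
      · obtain ⟨x, -, hpx, -⟩ := S2 p h
        exact ⟨x, hpx⟩
    set par : VS → VS := fun p => if h : ∃ q, AS p q then h.choose else c with hpardef
    have hparspec : ∀ p q, AS p q → p ≠ c → par p = q := by
      intro p q h hpc
      have he : ∃ q', AS p q' := ⟨q, h⟩
      have h2 := he.choose_spec
      have h3 := (A2 p he.choose h2 hpc).2.1 q h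
      rw [hpardef]
      simp only [dif_pos he]
      exact h3.symm
    set f : VS → VD := fun v => if v = c then a else if AS c v then g v else ℓ (par v) v
      with hfdef
    have hfc : f c = a := by rw [hfdef]; simp
    have hfx : ∀ x, AS c x → f x = g x := by
      intro x hx
      rw [hfdef]
      simp only [if_neg (hcadj hx), if_pos hx]
    have hfleaf : ∀ v, v ≠ c → ¬ AS c v → f v = ℓ (par v) v := by
      intro v h1 h2
      rw [hfdef]
      simp only [if_neg h1, if_neg h2]
    have hleaf : ∀ v, v ≠ c → ¬ AS c v → par v ∈ Xs ∧ v ∈ Yx (par v) ∧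
        f v ∈ (Finset.univ.filter fun w => AD w (g (par v))) \ insert a (Xs.image g) := by
      intro v h1 h2
      obtain ⟨q, hq⟩ := hpar0 v h1 h2
      have hpv : par v = q := hparspec v q hq h1
      have hA := A2 v q hq h1
      have hm1 : par v ∈ Xs := by rw [hpv]; exact hmemXs.mpr hA.1
      have hm2 : v ∈ Yx (par v) := by rw [hpv]; exact hmemYx.mpr ⟨hq, h1⟩
      refine ⟨hm1, hm2, ?_⟩
      have h5 := hℓ2 (par v) v hm2
      rw [hfleaf v h1 h2]
      exact h5
    have hgne_a : ∀ x ∈ Xs, g x ≠ a := fun x hx he => hDloopless a (he ▸ hgarc x hx)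
    have hclass : ∀ v : VS, v = c ∨ AS c v ∨ (v ≠ c ∧ ¬ AS c v) := by
      intro v
      by_cases h1 : v = c
      · exact Or.inl h1
      by_cases h2 : AS c v
      · exact Or.inr (Or.inl h2)
      · exact Or.inr (Or.inr ⟨h1, h2⟩)
    refine ⟨f, ?_, ?_⟩
    · intro v w hvw
      rcases hclass v with hv | hv | hv <;> rcases hclass w with hw | hw | hw
      · rw [hv, hw]
      · exfalso
        rw [hv, hfc, hfx w hw] at hvw
        exact hgne_a w (hmemXs.mpr hw) hvw.symm
      · exfalso
        obtain ⟨-, -, hm⟩ := hleaf w hw.1 hw.2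
        rw [hv, hfc] at hvw
        exact (Finset.mem_sdiff.mp hm).2 (by rw [← hvw]; exact Finset.mem_insert_self a _)
      · exfalso
        rw [hw, hfc, hfx v hv] at hvw
        exact hgne_a v (hmemXs.mpr hv) hvw
      · rw [hfx v hv, hfx w hw] at hvw
        exact hginj (Finset.mem_coe.mpr (hmemXs.mpr hv)) (Finset.mem_coe.mpr (hmemXs.mpr hw)) hvw
      · exfalso
        obtain ⟨-, -, hm⟩ := hleaf w hw.1 hw.2
        apply (Finset.mem_sdiff.mp hm).2
        rw [← hvw, hfx v hv]
        exact Finset.mem_insert_of_mem (Finset.mem_image_of_mem g (hmemXs.mpr hv))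
      · exfalso
        obtain ⟨-, -, hm⟩ := hleaf v hv.1 hv.2
        rw [hw, hfc] at hvw
        exact (Finset.mem_sdiff.mp hm).2 (by rw [hvw]; exact Finset.mem_insert_self a _)
      · exfalso
        obtain ⟨-, -, hm⟩ := hleaf v hv.1 hv.2
        apply (Finset.mem_sdiff.mp hm).2
        rw [hvw, hfx w hw]
        exact Finset.mem_insert_of_mem (Finset.mem_image_of_mem g (hmemXs.mpr hw))
      · obtain ⟨hp1v, hp2v, hmv⟩ := hleaf v hv.1 hv.2
        obtain ⟨hp1w, hp2w, hmw⟩ := hleaf w hw.1 hw.2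
        by_cases hpp : par v = par w
        · have h2' : ℓ (par v) v = ℓ (par v) w := by
            rw [← hfleaf v hv.1 hv.2, hvw, hfleaf w hw.1 hw.2, hpp]
          have hm2w : w ∈ Yx (par v) := by rw [hpp]; exact hp2w
          exact hℓ1 (par v) (Finset.mem_coe.mpr hp2v) (Finset.mem_coe.mpr hm2w) h2'
        · exfalso
          have gne : g (par v) ≠ g (par w) := fun he =>
            hpp (hginj (Finset.mem_coe.mpr hp1v) (Finset.mem_coe.mpr hp1w) he)
          have hADv : AD (f v) (g (par v)) :=
            (Finset.mem_filter.mp (Finset.mem_sdiff.mp hmv).1).2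
          have hADw : AD (f v) (g (par w)) := by
            rw [hvw]
            exact (Finset.mem_filter.mp (Finset.mem_sdiff.mp hmw).1).2
          have hfa := F1' hDloopless hC4 (hgarc _ hp1v) (hgarc _ hp1w) gne hADv hADw
          exact (Finset.mem_sdiff.mp hmv).2 (by rw [hfa]; exact Finset.mem_insert_self a _)
    · intro p q hpq
      by_cases hp : p = c
      · rw [hp, hfc, hfx q (hp ▸ hpq)]
        exact hgarc q (hmemXs.mpr (hp ▸ hpq))
      · have hA := A2 p q hpq hp
        obtain ⟨hp1, hp2, hm⟩ := hleaf p hp hA.2.2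
        have hpv : par p = q := hparspec p q hpq hp
        have harc : AD (f p) (g (par p)) :=
          (Finset.mem_filter.mp (Finset.mem_sdiff.mp hm).1).2
        rw [hpv] at harc
        rw [hfx q hA.1]
        exact harc
  -- degree facts and case analysis
  have hd2 : k ≤ 2 * ((k+1)/2) := by omega
  set d := (k+1)/2 with hddef
  have hd1 : 1 ≤ d := by omega
  have hdeg_in : ∀ u w : VD, AD w u → d ≤ inDeg AD u := by
    intro u w h
    have hpos : 0 < inDeg AD u :=
      Finset.card_pos.mpr ⟨w, Finset.mem_filter.mpr ⟨Finset.mem_univ _, h⟩⟩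
    have := (hpseudo u).2 hpos
    omega
  have hdeg_out : ∀ u w : VD, AD u w → d ≤ outDeg AD u := by
    intro u w h
    have hpos : 0 < outDeg AD u :=
      Finset.card_pos.mpr ⟨w, Finset.mem_filter.mpr ⟨Finset.mem_univ _, h⟩⟩
    have := (hpseudo u).1 hpos
    omega
  obtain ⟨a0, ha0⟩ := hΔout
  obtain ⟨b0, hb0⟩ := hΔin
  have ha0c : Xs.card + 1 ≤ outDeg AD a0 := by have h := ha0 c; rw [htotc] at h; omega
  have hb0c : Xs.card + 1 ≤ inDeg AD b0 := by have h := hb0 c; rw [htotc] at h; omega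
  have ha0x : ∀ x ∈ Xs, (Yx x).card + 2 ≤ outDeg AD a0 := by
    intro x hx; have h := ha0 x; rw [htotx x hx] at h; omega
  have hb0x : ∀ x ∈ Xs, (Yx x).card + 2 ≤ inDeg AD b0 := by
    intro x hx; have h := hb0 x; rw [htotx x hx] at h; omega
  by_cases ht0 : Xs.card = 0
  · have hXe : Xs = ∅ := Finset.card_eq_zero.mp ht0
    have hall : ∀ v : VS, v = c := by
      intro v
      rcases hdist01 v with h | h | h
      · exact h
      · exact absurd (hmemXs.mpr h) (by rw [hXe]; exact Finset.notMem_empty v)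
      · obtain ⟨x, hcx, -, -⟩ := S2 v h
        exact absurd (hmemXs.mpr hcx) (by rw [hXe]; exact Finset.notMem_empty x)
    exact ⟨fun _ => w0, fun v w _ => (hall v).trans (hall w).symm,
      fun p q hpq => absurd hpq (by rw [hall p, hall q]; exact noloop c)⟩
  have ht1 : 1 ≤ Xs.card := by omega
  by_cases hsup : ∃ x ∈ Xs, d ≤ (Yx x).card
  · -- Case (i): a super-heavy child exists
    obtain ⟨xs, hxsm, hxsY⟩ := hsup
    have hbpos : 0 < inDeg AD b0 := by omega
    obtain ⟨a', ha'⟩ : ∃ a', AD a' b0 := by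
      obtain ⟨w, hw⟩ := Finset.card_pos.mp hbpos
      exact ⟨w, (Finset.mem_filter.mp hw).2⟩
    have hbNa : b0 ∈ Finset.univ.filter (fun w => AD a' w) :=
      Finset.mem_filter.mpr ⟨Finset.mem_univ _, ha'⟩
    have houta' : d ≤ outDeg AD a' := hdeg_out a' b0 ha'
    have hYsum : d ≤ ∑ x ∈ Xs, (Yx x).card :=
      le_trans hxsY (Finset.single_le_sum (f := fun z => (Yx z).card) (fun i _ => Nat.zero_le _) hxsm)
    have htd : Xs.card ≤ d := by omega
    have hcard0 : (Xs.erase xs).card ≤ ((Finset.univ.filter fun w => AD a' w) \ {b0}).card := by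
      rw [Finset.card_erase_of_mem hxsm,
        Finset.card_sdiff_of_subset (Finset.singleton_subset_iff.mpr hbNa)]
      have houtd : outDeg AD a' = (Finset.univ.filter fun w => AD a' w).card := rfl
      simp only [Finset.card_singleton]
      omega
    obtain ⟨g0, hg01, hg02⟩ := exists_injOn_of_card_le' (Xs.erase xs)
      ((Finset.univ.filter fun w => AD a' w) \ {b0}) hcard0
    set g : VS → VD := fun x => if x = xs then b0 else g0 x with hgdef
    have hgother : ∀ x ∈ Xs, x ≠ xs → AD a' (g x) ∧ g x ≠ b0 := by
      intro x hx hne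
      have hm := hg02 x (Finset.mem_erase.mpr ⟨hne, hx⟩)
      rw [hgdef]
      simp only [if_neg hne]
      exact ⟨(Finset.mem_filter.mp (Finset.mem_sdiff.mp hm).1).2,
        fun he => (Finset.mem_sdiff.mp hm).2 (Finset.mem_singleton.mpr he)⟩
    have hgarc : ∀ x ∈ Xs, AD a' (g x) := by
      intro x hx
      by_cases hne : x = xs
      · rw [hgdef]; simp only [if_pos hne]; exact ha'
      · exact (hgother x hx hne).1
    have himgsub : ∀ v ∈ Xs.image g, AD a' v := by
      intro v hv
      obtain ⟨x', hx', rfl⟩ := Finset.mem_image.mp hv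
      exact hgarc x' hx'
    apply MAIN a' g
    · intro x hx y hy he
      have hx' : x ∈ Xs := hx
      have hy' : y ∈ Xs := hy
      by_cases h1 : x = xs <;> by_cases h2 : y = xs
      · rw [h1, h2]
      · exfalso
        have hgx : g x = b0 := by rw [hgdef]; simp only [if_pos h1]
        exact (hgother y hy' h2).2 (by rw [← he, hgx])
      · exfalso
        have hgy : g y = b0 := by rw [hgdef]; simp only [if_pos h2]
        exact (hgother x hx' h1).2 (by rw [he, hgy])
      · have hgx : g x = g0 x := by rw [hgdef]; simp only [if_neg h1]
        have hgy : g y = g0 y := by rw [hgdef]; simp only [if_neg h2]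
        rw [hgx, hgy] at he
        exact hg01 (Finset.mem_coe.mpr (Finset.mem_erase.mpr ⟨h1, hx'⟩))
          (Finset.mem_coe.mpr (Finset.mem_erase.mpr ⟨h2, hy'⟩)) he
    · exact hgarc
    · intro x hx
      by_cases h1 : x = xs
      · subst h1
        have hgx : g x = b0 := by rw [hgdef]; simp
        have h2 := sdiff_card_ge_two hDloopless hC4 a' b0 (Xs.image g) himgsub ha'
        have h3 := hb0x x hxsm
        rw [hgx]
        omega
      · have harc := hgarc x hx
        have hdin := hdeg_in (g x) a' harc
        have ht2 : 2 ≤ Xs.card :=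
          Finset.one_lt_card.mpr ⟨xs, hxsm, x, hx, fun hh => h1 hh.symm⟩
        have hpair : (Yx xs).card + (Yx x).card ≤ ∑ z ∈ Xs, (Yx z).card := by
          have hsub : ({xs, x} : Finset VS) ⊆ Xs := by
            intro z hz
            rcases Finset.mem_insert.mp hz with rfl | hz
            · exact hxsm
            · rw [Finset.mem_singleton.mp hz]; exact hx
          calc (Yx xs).card + (Yx x).card
              = ∑ z ∈ ({xs, x} : Finset VS), (Yx z).card := by
                rw [Finset.sum_pair (fun hh => h1 hh.symm)]
            _ ≤ _ := Finset.sum_le_sum_of_subset hsub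
        have h2 := sdiff_card_ge_two hDloopless hC4 a' (g x) (Xs.image g) himgsub harc
        omega
  · -- Case (ii): no super-heavy child
    push_neg at hsup
    set Na := Finset.univ.filter (fun w => AD a0 w) with hNa
    have hmNa : Xs.card + 1 ≤ Na.card := by
      have hh : outDeg AD a0 = Na.card := rfl
      omega
    set H := Xs.filter (fun x => d ≤ (Yx x).card + 1) with hH
    have hHsub : H ⊆ Xs := Finset.filter_subset _ _
    have hHlb0 := Finset.card_nsmul_le_sum H (fun x => (Yx x).card) (d-1)
      (fun x hx => by
        have h2 := (Finset.mem_filter.mp hx).2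
        show d - 1 ≤ (Yx x).card
        omega)
    rw [smul_eq_mul] at hHlb0
    have hHsumle : ∑ x ∈ H, (Yx x).card ≤ ∑ x ∈ Xs, (Yx x).card :=
      Finset.sum_le_sum_of_subset hHsub
    have hHX : H.card ≤ Xs.card := Finset.card_le_card hHsub
    have hH2 : H.card ≤ 2 := by
      by_contra hh
      push_neg at hh
      have h3 : 3 * (d - 1) ≤ H.card * (d-1) := Nat.mul_le_mul_right _ (by omega)
      have h4 : 3 * (d - 1) ≤ ∑ x ∈ H, (Yx x).card := le_trans h3 hHlb0
      omega
    by_cases hHe : H = ∅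
    · -- no heavy children
      obtain ⟨g0, hg01, hg02⟩ := exists_injOn_of_card_le' Xs Na (by omega)
      have hgarc : ∀ x ∈ Xs, AD a0 (g0 x) := fun x hx => (Finset.mem_filter.mp (hg02 x hx)).2
      have himgsub : ∀ v ∈ Xs.image g0, AD a0 v := by
        intro v hv
        obtain ⟨x', hx', rfl⟩ := Finset.mem_image.mp hv
        exact hgarc x' hx'
      apply MAIN a0 g0 hg01 hgarc
      intro x hx
      have hlight : (Yx x).card + 2 ≤ d := by
        have hnH : x ∉ H := by rw [hHe]; exact Finset.notMem_empty x
        rw [hH] at hnH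
        simp only [Finset.mem_filter] at hnH
        push_neg at hnH
        have := hnH hx
        omega
      have h2 := sdiff_card_ge_two hDloopless hC4 a0 (g0 x) (Xs.image g0) himgsub (hgarc x hx)
      have hdin := hdeg_in (g0 x) a0 (hgarc x hx)
      omega
    · obtain ⟨x1, hx1H⟩ := Finset.nonempty_iff_ne_empty.mpr hHe
      have hx1X : x1 ∈ Xs := hHsub hx1H
      have hx1light : (Yx x1).card + 1 ≤ d := by
        have := hsup x1 hx1X
        omega
      have hNapos : 0 < Na.card := by omega
      obtain ⟨u1, hu1⟩ := Finset.card_pos.mp hNapos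
      have hu1arc : AD a0 u1 := (Finset.mem_filter.mp hu1).2
      set P1 := Na.filter (fun v => AD v u1 ∨ AD u1 v) with hP1
      have hne_u : ∀ z, (AD z u1 ∨ AD u1 z) → u1 ≠ z := by
        intro z hz he
        rcases hz with h | h
        · rw [← he] at h; exact hDloopless u1 h
        · rw [← he] at h; exact hDloopless u1 h
      have hP1card : P1.card ≤ 1 := by
        rw [Finset.card_le_one]
        intro z1 hz1 z2 hz2
        by_contra hne
        obtain ⟨hz1Na, hz1p⟩ := Finset.mem_filter.mp hz1
        obtain ⟨hz2Na, hz2p⟩ := Finset.mem_filter.mp hz2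
        exact partner' hDloopless hC4 hu1arc ((Finset.mem_filter.mp hz1Na).2)
          ((Finset.mem_filter.mp hz2Na).2) (hne_u z1 hz1p) (hne_u z2 hz2p) hne hz1p hz2p
      have hiP2 : (insert u1 P1).card ≤ 2 := le_trans (Finset.card_insert_le _ _) (by omega)
      have hsd := Finset.le_card_sdiff (insert u1 P1) Na
      by_cases hH1 : H.card ≤ 1
      · -- H = {x1}
        have hHone : ∀ z ∈ H, z = x1 := fun z hz => Finset.card_le_one.mp hH1 z hz x1 hx1H
        have hcard0 : (Xs.erase x1).card ≤ (Na \ insert u1 P1).card := by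
          rw [Finset.card_erase_of_mem hx1X]
          omega
        obtain ⟨g0, hg01, hg02⟩ :=
          exists_injOn_of_card_le' (Xs.erase x1) (Na \ insert u1 P1) hcard0
        set g : VS → VD := fun x => if x = x1 then u1 else g0 x with hgdef
        have hgx1 : g x1 = u1 := by rw [hgdef]; simp
        have hgother : ∀ x ∈ Xs, x ≠ x1 →
            AD a0 (g x) ∧ g x ≠ u1 ∧ ¬ (AD (g x) u1 ∨ AD u1 (g x)) := by
          intro x hx hne
          have hm := hg02 x (Finset.mem_erase.mpr ⟨hne, hx⟩)
          obtain ⟨hmNa', hmni⟩ := Finset.mem_sdiff.mp hm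
          have hgx : g x = g0 x := by rw [hgdef]; simp only [if_neg hne]
          rw [hgx]
          refine ⟨(Finset.mem_filter.mp hmNa').2, ?_, ?_⟩
          · intro he
            exact hmni (by rw [he]; exact Finset.mem_insert_self _ _)
          · intro hor
            exact hmni (Finset.mem_insert_of_mem (Finset.mem_filter.mpr ⟨hmNa', hor⟩))
        have hgarc : ∀ x ∈ Xs, AD a0 (g x) := by
          intro x hx
          by_cases hne : x = x1
          · rw [hne, hgx1]; exact hu1arc
          · exact (hgother x hx hne).1
        have himgsub : ∀ v ∈ Xs.image g, AD a0 v := by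
          intro v hv
          obtain ⟨x', hx', rfl⟩ := Finset.mem_image.mp hv
          exact hgarc x' hx'
        apply MAIN a0 g
        · intro x hx y hy he
          have hx' : x ∈ Xs := hx
          have hy' : y ∈ Xs := hy
          by_cases h1 : x = x1 <;> by_cases h2 : y = x1
          · rw [h1, h2]
          · exfalso
            rw [h1, hgx1] at he
            exact (hgother y hy' h2).2.1 he.symm
          · exfalso
            rw [h2, hgx1] at he
            exact (hgother x hx' h1).2.1 he
          · have hgx : g x = g0 x := by rw [hgdef]; simp only [if_neg h1]
            have hgy : g y = g0 y := by rw [hgdef]; simp only [if_neg h2]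
            rw [hgx, hgy] at he
            exact hg01 (Finset.mem_coe.mpr (Finset.mem_erase.mpr ⟨h1, hx'⟩))
              (Finset.mem_coe.mpr (Finset.mem_erase.mpr ⟨h2, hy'⟩)) he
        · exact hgarc
        · intro x hx
          by_cases h1 : x = x1
          · have hprot : ∀ v ∈ Xs.image g, ¬ AD v u1 := by
              intro v hv
              obtain ⟨x', hx', rfl⟩ := Finset.mem_image.mp hv
              by_cases hne : x' = x1
              · rw [hne, hgx1]; exact hDloopless u1
              · exact fun h => (hgother x' hx' hne).2.2 (Or.inl h)
            have h2 := sdiff_card_ge_one (AD := AD) hDloopless a0 u1 (Xs.image g) hprot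
            have hdin := hdeg_in u1 a0 hu1arc
            rw [h1, hgx1]
            omega
          · have hxnH : x ∉ H := fun hxx => h1 (hHone x hxx)
            have hlight : (Yx x).card + 2 ≤ d := by
              rw [hH] at hxnH
              simp only [Finset.mem_filter] at hxnH
              push_neg at hxnH
              have := hxnH hx
              omega
            have harc := hgarc x hx
            have h2 := sdiff_card_ge_two hDloopless hC4 a0 (g x) (Xs.image g) himgsub harc
            have hdin := hdeg_in (g x) a0 harc
            omega
      · -- H.card = 2, hence Xs = H has exactly two elements
        have hH2' : H.card = 2 := by omega
        have h4 : 2 * (d - 1) ≤ ∑ x ∈ H, (Yx x).card := by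
          calc 2 * (d - 1) = H.card * (d - 1) := by rw [hH2']
            _ ≤ _ := hHlb0
        have hXt : Xs.card ≤ 2 := by omega
        have hXH : H = Xs := Finset.eq_of_subset_of_card_le hHsub (by omega)
        obtain ⟨x2, hx2H, hx2ne⟩ : ∃ x2 ∈ H, x2 ≠ x1 := by
          have h5 : 1 < H.card := by omega
          obtain ⟨a1, ha1, b1, hb1, hab⟩ := Finset.one_lt_card.mp h5
          by_cases he : a1 = x1
          · exact ⟨b1, hb1, by rw [← he]; exact hab.symm⟩
          · exact ⟨a1, ha1, he⟩
        have hx2X : x2 ∈ Xs := hHsub hx2H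
        have hx2light : (Yx x2).card + 1 ≤ d := by
          have := hsup x2 hx2X
          omega
        have hHset : ∀ z ∈ Xs, z = x1 ∨ z = x2 := by
          intro z hz
          by_contra hzz
          push_neg at hzz
          have hsub3 : ({x1, x2, z} : Finset VS) ⊆ Xs := by
            intro w hw
            simp only [Finset.mem_insert, Finset.mem_singleton] at hw
            rcases hw with rfl | rfl | rfl
            · exact hx1X
            · exact hx2X
            · exact hz
          have hc3 : ({x1, x2, z} : Finset VS).card = 3 := by
            rw [Finset.card_insert_of_notMem, Finset.card_insert_of_notMem,
              Finset.card_singleton]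
            · rw [Finset.mem_singleton]
              exact fun h => hzz.2 h.symm
            · simp only [Finset.mem_insert, Finset.mem_singleton]
              push_neg
              exact ⟨Ne.symm hx2ne, fun h => hzz.1 h.symm⟩
          have := Finset.card_le_card hsub3
          omega
        have hcard2 : 0 < (Na \ insert u1 P1).card := by omega
        obtain ⟨u2, hu2⟩ := Finset.card_pos.mp hcard2
        obtain ⟨hu2Na, hu2ni⟩ := Finset.mem_sdiff.mp hu2
        have hu2arc : AD a0 u2 := (Finset.mem_filter.mp hu2Na).2
        have hu2u1 : u2 ≠ u1 := fun he => hu2ni (by rw [he]; exact Finset.mem_insert_self _ _)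
        have hu2P : ¬ (AD u2 u1 ∨ AD u1 u2) := fun hor =>
          hu2ni (Finset.mem_insert_of_mem (Finset.mem_filter.mpr ⟨hu2Na, hor⟩))
        set g : VS → VD := fun x => if x = x1 then u1 else u2 with hgdef
        have hgx1 : g x1 = u1 := by rw [hgdef]; simp
        have hgx2 : g x2 = u2 := by rw [hgdef]; simp only [if_neg hx2ne]
        have hgarc : ∀ x ∈ Xs, AD a0 (g x) := by
          intro x hx
          rcases hHset x hx with h1 | h1
          · rw [h1, hgx1]; exact hu1arc
          · rw [h1, hgx2]; exact hu2arc
        have himgsub : ∀ v ∈ Xs.image g, AD a0 v := by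
          intro v hv
          obtain ⟨x', hx', rfl⟩ := Finset.mem_image.mp hv
          exact hgarc x' hx'
        apply MAIN a0 g
        · intro x hx y hy he
          have hx' : x ∈ Xs := hx
          have hy' : y ∈ Xs := hy
          rcases hHset x hx' with h1 | h1 <;> rcases hHset y hy' with h2 | h2
          · rw [h1, h2]
          · exfalso
            rw [h1, h2, hgx1, hgx2] at he
            exact hu2u1 he.symm
          · exfalso
            rw [h1, h2, hgx1, hgx2] at he
            exact hu2u1 he
          · rw [h1, h2]
        · exact hgarc
        · intro x hx
          have hprot : ∀ v ∈ Xs.image g, ¬ AD v (g x) := by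
            intro v hv
            obtain ⟨x', hx', rfl⟩ := Finset.mem_image.mp hv
            rcases hHset x' hx' with h1 | h1 <;> rcases hHset x hx with h2 | h2
            · rw [h1, h2, hgx1]; exact hDloopless u1
            · rw [h1, h2, hgx1, hgx2]; exact fun h => hu2P (Or.inr h)
            · rw [h1, h2, hgx2, hgx1]; exact fun h => hu2P (Or.inl h)
            · rw [h1, h2, hgx2]; exact hDloopless u2
          have h2 := sdiff_card_ge_one (AD := AD) hDloopless a0 (g x) (Xs.image g) hprot
          have hdin := hdeg_in (g x) a0 (hgarc x hx)
          have hli : (Yx x).card + 1 ≤ d := by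
            rcases hHset x hx with h1 | h1
            · rw [h1]; exact hx1light
            · rw [h1]; exact hx2light
          omega

end Helpers

/-- **Claim (small-diameter antidirected subtrees embed).** Let `S` be an
antidirected tree with at most `k` arcs whose underlying tree has diameter at
most 4. If `D` has minimum pseudo-semidegree at least `k/2`, all 4-cycles of `D`
are directed, and `Δ±(D) > Δᵗᵒᵗ(S)`, then `D` contains `S`. -/
theorem small_diameter_antidirected_tree_embeds
    {VS VD : Type*} [Fintype VS] [DecidableEq VS] [Fintype VD]
    (AS : VS → VS → Prop) [DecidableRel AS] (AD : VD → VD → Prop) [DecidableRel AD]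
    (k : ℕ) (hk : 0 < k)
    (hS : IsOrientedTree AS) (hSanti : IsAntidirected AS) (hSarcs : numArcs AS ≤ k)
    (hdiam : ∀ x y : VS, (underlying AS).dist x y ≤ 4)
    (hDloopless : ∀ v : VD, ¬ AD v v)
    (hDarcs : ∃ x y : VD, AD x y)
    (hpseudo : ∀ v : VD, (0 < outDeg AD v → k ≤ 2 * outDeg AD v) ∧
      (0 < inDeg AD v → k ≤ 2 * inDeg AD v))
    (hC4 : C4StarFree AD)
    (hΔout : ∃ a : VD, ∀ s : VS, totDeg AS s < outDeg AD a)
    (hΔin : ∃ b : VD, ∀ s : VS, totDeg AS s < inDeg AD b) :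
    Contains AS AD := by
  classical
  obtain ⟨c, hecc⟩ := exists_center hS.2 hdiam
  rcases hSanti c with hsrc | hsink
  · exact aux AS AD k hk hS hSanti hSarcs hDloopless hDarcs hpseudo hC4 hΔout hΔin c hecc hsrc
  · -- flip everything
    set AS' : VS → VS → Prop := fun x y => AS y x with hAS'
    set AD' : VD → VD → Prop := fun x y => AD y x with hAD'
    letI : DecidableRel AS' := fun x y => inferInstanceAs (Decidable (AS y x))
    letI : DecidableRel AD' := fun x y => inferInstanceAs (Decidable (AD y x))
    have hU : underlying AS' = underlying AS := by
      ext x y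
      show x ≠ y ∧ (AS y x ∨ AS x y) ↔ x ≠ y ∧ (AS x y ∨ AS y x)
      tauto
    have hS' : IsOrientedTree AS' := by
      refine ⟨fun x y h => hS.1 y x h, ?_⟩
      rw [hU]
      exact hS.2
    have hSanti' : IsAntidirected AS' := by
      intro v
      rcases hSanti v with h | h
      · exact Or.inr h
      · exact Or.inl h
    have hnum' : numArcs AS' = numArcs AS := by
      show (Finset.univ.filter fun p : VS × VS => AS p.2 p.1).card
        = (Finset.univ.filter fun p : VS × VS => AS p.1 p.2).card
      apply Finset.card_bij (fun p _ => Prod.swap p)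
      · intro p hp
        simp only [Finset.mem_filter, Finset.mem_univ, true_and] at hp ⊢
        exact hp
      · intro p1 h1 p2 h2 he
        exact Prod.swap_injective he
      · intro p hp
        simp only [Finset.mem_filter, Finset.mem_univ, true_and] at hp ⊢
        exact ⟨Prod.swap p, hp, rfl⟩
    have houtdeg : ∀ v, outDeg AD' v = inDeg AD v := fun v => rfl
    have hindeg : ∀ v, inDeg AD' v = outDeg AD v := fun v => rfl
    have htot' : ∀ s, totDeg AS' s = totDeg AS s := by
      intro s
      show (Finset.univ.filter fun w => w ≠ s ∧ (AS w s ∨ AS s w)).card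
        = (Finset.univ.filter fun w => w ≠ s ∧ (AS s w ∨ AS w s)).card
      congr 1
      ext w
      simp only [Finset.mem_filter, Finset.mem_univ, true_and]
      tauto
    have hC4' : C4StarFree AD' := by
      intro a b c' d' h1 h2 h3 h4 h5 h6 e1 e2 e3 e4 g1 g2 g3 g4
      have hd : ∀ (x y : VD) (e : Bool), dirArc AD' x y e → dirArc AD x y (!e) := by
        intro x y e h
        cases e
        · exact h
        · exact h
      have := hC4 a b c' d' h1 h2 h3 h4 h5 h6 (!e1) (!e2) (!e3) (!e4)
        (hd _ _ _ g1) (hd _ _ _ g2) (hd _ _ _ g3) (hd _ _ _ g4)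
      obtain ⟨q1, q2, q3⟩ := this
      refine ⟨?_, ?_, ?_⟩
      · cases e1 <;> cases e2 <;> simp_all
      · cases e2 <;> cases e3 <;> simp_all
      · cases e3 <;> cases e4 <;> simp_all
    have hecc' : ∀ v, (underlying AS').dist c v ≤ 2 := by
      intro v
      rw [hU]
      exact hecc v
    have hsrc' : ∀ u, ¬ AS' u c := fun u => hsink u
    have hΔout' : ∃ a : VD, ∀ s : VS, totDeg AS' s < outDeg AD' a := by
      obtain ⟨b, hb⟩ := hΔin
      exact ⟨b, fun s => by rw [htot' s, houtdeg b]; exact hb s⟩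
    have hΔin' : ∃ b : VD, ∀ s : VS, totDeg AS' s < inDeg AD' b := by
      obtain ⟨a, ha⟩ := hΔout
      exact ⟨a, fun s => by rw [htot' s, hindeg a]; exact ha s⟩
    have hres := aux AS' AD' k hk hS' hSanti' (by rw [hnum']; exact hSarcs)
      (fun v h => hDloopless v h) (by obtain ⟨x, y, h⟩ := hDarcs; exact ⟨y, x, h⟩)
      (fun v => by
        constructor
        · rw [houtdeg v]; exact (hpseudo v).2
        · rw [hindeg v]; exact (hpseudo v).1)
      hC4' hΔout' hΔin' c hecc' hsrc'
    obtain ⟨f, hf1, hf2⟩ := hres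
    exact ⟨f, hf1, fun x y h => hf2 y x h⟩
end

section
/- Let m ≥ 1 and n ≥ 3 be integers and let O be the blow-up of the directed n-cycle by independent sets of size m: its vertex set is the disjoint union of sets V₁, …, Vₙ, each of size m, and its arcs are exactly all pairs (u,v) with u ∈ Vᵢ and v ∈ V_{i+1} (indices modulo n). Then δ⁰(O) = m; every connected antidirected subdigraph of O containing at least one arc has all its vertices in Vᵢ ∪ V_{i+1} for some i; and consequently O contains no antidirected tree with more than 2m vertices — in particular, O contains no antidirected tree with 2m arcs. -/
open Finset

/-- The arc relation of the blow-up of the directed `n`-cycle by independent sets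
of size `m`: the vertex classes are `Vᵢ = {i} × Fin m`, and all arcs go from
`Vᵢ` to `V_{i+1}` (indices modulo `n`). -/
def blowupArcs (n m : ℕ) [NeZero n] (p q : Fin n × Fin m) : Prop := q.1 = p.1 + 1

instance (n m : ℕ) [NeZero n] : DecidableRel (blowupArcs n m) :=
  fun p q => inferInstanceAs (Decidable (q.1 = p.1 + 1))

-- key lemma
lemma key_lemma {n m : ℕ} [NeZero n] {W : Type} {B : W → W → Prop} {g : W → Fin n × Fin m}
    (hg : ∀ x y, B x y → blowupArcs n m (g x) (g y))
    (hconn : (underlying B).Connected) (hanti : IsAntidirected B)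
    {x y : W} (hxy : B x y) :
    ∀ w, ((g w).1 = (g x).1 ∧ ∀ u, ¬ B u w) ∨ ((g w).1 = (g x).1 + 1 ∧ ∀ u, ¬ B w u) := by
  set i := (g x).1 with hi
  set Q : W → Prop := fun w => ((g w).1 = i ∧ ∀ u, ¬ B u w) ∨ ((g w).1 = i + 1 ∧ ∀ u, ¬ B w u)
    with hQ
  have hQx : Q x := by
    rcases hanti x with h | h
    · exact Or.inl ⟨rfl, h⟩
    · exact absurd hxy (h y)
  have step : ∀ a b, (underlying B).Adj a b → Q a → Q b := by
    rintro a b ⟨hne, hab | hba⟩ hQa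
    · -- B a b
      rcases hQa with ⟨hla, hina⟩ | ⟨hla, houta⟩
      · -- a source at level i
        have hlb : (g b).1 = i + 1 := by
          have := hg a b hab; rw [blowupArcs] at this; rw [this, hla]
        rcases hanti b with h | h
        · exact absurd hab (h a)
        · exact Or.inr ⟨hlb, h⟩
      · exact absurd hab (houta b)
    · -- B b a
      rcases hQa with ⟨hla, hina⟩ | ⟨hla, houta⟩
      · exact absurd hba (hina b)
      · have hlb : (g b).1 = i := by
          have := hg b a hba; rw [blowupArcs] at this
          have : (g b).1 + 1 = i + 1 := by rw [← this, hla]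
          exact add_right_cancel this
        rcases hanti b with h | h
        · exact Or.inl ⟨hlb, h⟩
        · exact absurd hba (h a)
  have walkind : ∀ a b (p : (underlying B).Walk a b), Q a → Q b := by
    intro a b p
    induction p with
    | nil => exact id
    | cons h p ih => exact fun ha => ih (step _ _ h ha)
  intro w
  obtain ⟨p⟩ := hconn x w
  exact walkind x w p hQx


lemma arcs_eq_edges {W : Type} [Fintype W] [DecidableEq W] (B : W → W → Prop) [DecidableRel B]
    [Fintype (underlying B).edgeSet]
    (hor : ∀ x y, ¬ (B x y ∧ B y x)) :
    numArcs B = (underlying B).edgeFinset.card := by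
  have hnoloop : ∀ w : W, ¬ B w w := fun w h => hor w w ⟨h, h⟩
  rw [numArcs]
  apply Finset.card_bij (fun p _ => s(p.1, p.2))
  · intro p hp
    rw [mem_filter] at hp
    rw [SimpleGraph.mem_edgeFinset]
    exact ⟨fun he => hnoloop p.1 (he ▸ hp.2), Or.inl hp.2⟩
  · intro p hp q hq h
    rw [mem_filter] at hp hq
    rw [Sym2.eq_iff] at h
    rcases h with ⟨h1, h2⟩ | ⟨h1, h2⟩
    · exact Prod.ext h1 h2
    · exact absurd ⟨hp.2, h2 ▸ h1 ▸ hq.2⟩ (hor p.1 p.2)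
  · intro e he
    induction e with
    | _ a b =>
      rw [SimpleGraph.mem_edgeFinset] at he
      rcases he.2 with h | h
      · exact ⟨(a, b), by simpa using h, rfl⟩
      · exact ⟨(b, a), by simpa using h, Sym2.eq_swap⟩


/-- **Claim (the blow-up of a directed cycle).** For `m ≥ 1` and `n ≥ 3`, the
blow-up `O` of the directed `n`-cycle by independent sets of size `m` has
minimum semidegree `m` (indeed every out- and in-degree equals `m`); every
connected antidirected subdigraph of `O` containing an arc has all its vertices
in `Vᵢ ∪ V_{i+1}` for some `i`; consequently `O` contains no antidirected tree
with more than `2m` vertices, and in particular none with `2m` arcs. -/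
theorem blowup_directed_cycle
    (m n : ℕ) [NeZero n] (hm : 1 ≤ m) (hn : 3 ≤ n) :
    (∀ v : Fin n × Fin m, outDeg (blowupArcs n m) v = m ∧ inDeg (blowupArcs n m) v = m) ∧
    (∀ (W : Type) (B : W → W → Prop) (g : W → Fin n × Fin m),
      Function.Injective g → (∀ x y : W, B x y → blowupArcs n m (g x) (g y)) →
      (underlying B).Connected → IsAntidirected B → (∃ x y : W, B x y) →
      ∃ i : Fin n, ∀ w : W, (g w).1 = i ∨ (g w).1 = i + 1) ∧
    (∀ (W : Type) [Fintype W] (B : W → W → Prop),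
      IsOrientedTree B → IsAntidirected B → 2 * m < Fintype.card W →
      ¬ Contains B (blowupArcs n m)) ∧
    (∀ (W : Type) [Fintype W] (B : W → W → Prop) [DecidableRel B],
      IsOrientedTree B → IsAntidirected B → numArcs B = 2 * m →
      ¬ Contains B (blowupArcs n m)) := by
  have part3 : ∀ (W : Type) [Fintype W] (B : W → W → Prop),
      IsOrientedTree B → IsAntidirected B → 2 * m < Fintype.card W →
      ¬ Contains B (blowupArcs n m) := by
    intro W _ B htree hanti hcard
    rintro ⟨f, hinj, hmap⟩
    have hconn : (underlying B).Connected := htree.2.isConnected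
    -- find an arc
    obtain ⟨a, b, hab⟩ : ∃ a b : W, a ≠ b :=
      Fintype.exists_pair_of_one_lt_card (by omega)
    obtain ⟨p⟩ := hconn a b
    have harc : ∃ x y : W, B x y := by
      cases p with
      | nil => exact absurd rfl hab
      | cons h q => rcases h.2 with h' | h'
                    · exact ⟨_, _, h'⟩
                    · exact ⟨_, _, h'⟩
    obtain ⟨x, y, hxy⟩ := harc
    set i := (f x).1
    have hi : ∀ w : W, (f w).1 = i ∨ (f w).1 = i + 1 := fun w =>
      (key_lemma hmap hconn hanti hxy w).imp And.left And.left
    have hmaps : ∀ w ∈ (univ : Finset W),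
        f w ∈ ({i, i + 1} : Finset (Fin n)) ×ˢ (univ : Finset (Fin m)) := by
      intro w _
      simp only [mem_product, mem_insert, mem_singleton, mem_univ, and_true]
      exact hi w
    have hle := Finset.card_le_card_of_injOn f hmaps hinj.injOn
    rw [card_univ, card_product, card_univ, Fintype.card_fin] at hle
    have h2 : ({i, i + 1} : Finset (Fin n)).card ≤ 2 :=
      (card_insert_le _ _).trans (by simp)
    have : Fintype.card W ≤ 2 * m :=
      hle.trans (Nat.mul_le_mul_right m h2)
    omega
  refine ⟨?_, ?_, part3, ?_⟩
  · intro v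
    constructor
    · have h : (univ.filter fun w : Fin n × Fin m => blowupArcs n m v w)
          = {v.1 + 1} ×ˢ univ := by
        ext p; simp only [mem_filter, mem_univ, true_and, mem_product,
          mem_singleton, and_true, blowupArcs]
        exact Finset.mem_filter.trans (by simp)
      rw [outDeg, h, card_product]; simp
    · have h : (univ.filter fun w : Fin n × Fin m => blowupArcs n m w v)
          = {v.1 - 1} ×ˢ univ := by
        ext p; simp only [mem_filter, mem_univ, true_and, mem_product,
          mem_singleton, and_true, blowupArcs, eq_sub_iff_add_eq, eq_comm]
        exact Finset.mem_filter.trans (by simp)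
      rw [inDeg, h, card_product]; simp
  · rintro W B g hginj hg hconn hanti ⟨x, y, hxy⟩
    exact ⟨(g x).1, fun w => (key_lemma hg hconn hanti hxy w).imp And.left And.left⟩
  · intro W _ B _ htree hanti harcs
    classical
    have hedges := htree.2.card_edgeFinset
    have hnum := arcs_eq_edges B htree.1
    exact part3 W B htree hanti (by omega)
end

section
/- Let k ≥ 6 be an integer divisible by 6. Let G be the undirected graph whose vertex set is the disjoint union of sets A and B, each of size k/2, together with one further vertex u, whose edges are all pairs inside A, all pairs inside B, and all pairs containing u. Let D be the digraph obtained from G by replacing every edge by arcs in both directions. Then the minimum semidegree of D equals k/2 and Δ±(D) = k, but D does not contain any orientation of the spider Sₖ — the tree consisting of a centre vertex with three pendant paths attached, each path having k/3 edges — as a subdigraph. -/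
open Finset

/-- The spider `Sₖ` with `k = 3m` edges: a centre vertex (`none`) with three
pendant paths attached, each with `m` edges. The vertex `some (j, i)` is the
`(i+1)`-st vertex on the `j`-th path. -/
def spiderAdj (m : ℕ) : Option (Fin 3 × Fin m) → Option (Fin 3 × Fin m) → Prop
  | none, none => False
  | none, some (_, i) => (i : ℕ) = 0
  | some (_, i), none => (i : ℕ) = 0
  | some (j, i), some (j₂, i₂) => j = j₂ ∧ ((i : ℕ) + 1 = i₂ ∨ (i₂ : ℕ) + 1 = i)

/-- The block of a vertex: `0` for the first clique `A`, `1` for the second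
clique `B`, `2` for the universal vertex `u`. -/
def blk {m : ℕ} : Fin m ⊕ Fin m ⊕ Unit → Fin 3
  | Sum.inl _ => 0
  | Sum.inr (Sum.inl _) => 1
  | Sum.inr (Sum.inr _) => 2


/-- The digraph obtained from the graph consisting of two cliques `A`, `B` of
size `m` together with a universal vertex `u`, by replacing each edge with arcs
in both directions. -/
def hostArcs (m : ℕ) (x y : Fin m ⊕ Fin m ⊕ Unit) : Prop :=
  x ≠ y ∧ (blk x = blk y ∨ blk x = 2 ∨ blk y = 2)

instance (m : ℕ) : DecidableRel (hostArcs m) :=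
  fun x y => inferInstanceAs (Decidable (x ≠ y ∧ (blk x = blk y ∨ blk x = 2 ∨ blk y = 2)))


lemma host_symm {m : ℕ} {x y : Fin m ⊕ Fin m ⊕ Unit} : hostArcs m x y ↔ hostArcs m y x := by
  unfold hostArcs
  constructor <;> rintro ⟨h1, h2⟩ <;> exact ⟨h1.symm, by tauto⟩

lemma inDeg_eq_outDeg {m : ℕ} (v : Fin m ⊕ Fin m ⊕ Unit) :
    inDeg (hostArcs m) v = outDeg (hostArcs m) v := by
  unfold inDeg outDeg
  congr 1
  ext w
  simp [host_symm]

lemma outDeg_inl {m : ℕ} (a : Fin m) : outDeg (hostArcs m) (Sum.inl a) = m := by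
  unfold outDeg
  have h : (univ.filter fun w => hostArcs m (Sum.inl a) w) =
      ((univ.erase a).map ⟨Sum.inl, Sum.inl_injective⟩) ∪ {Sum.inr (Sum.inr ())} := by
    ext w
    rcases w with b | b | b
    · simp [hostArcs, blk, Sum.inl_injective.ne_iff, ne_comm]
    · simp [hostArcs, blk]
    · simp [hostArcs, blk]
  rw [h, card_union_of_disjoint, card_map, card_erase_of_mem (mem_univ a), card_singleton]
  · have : 0 < m := a.pos
    rw [Finset.card_univ, Fintype.card_fin]
    omega
  · simp

lemma outDeg_inr {m : ℕ} (a : Fin m) : outDeg (hostArcs m) (Sum.inr (Sum.inl a)) = m := by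
  unfold outDeg
  have h : (univ.filter fun w => hostArcs m (Sum.inr (Sum.inl a)) w) =
      ((univ.erase a).map ⟨fun b => Sum.inr (Sum.inl b), fun x y h => by
        simpa using h⟩) ∪ {Sum.inr (Sum.inr ())} := by
    ext w
    rcases w with b | b | b
    · simp [hostArcs, blk]
    · simp only [Finset.mem_filter, Finset.mem_univ, true_and, Finset.mem_union, Finset.mem_map]
      erw [Function.Embedding.coeFn_mk]
      simp [hostArcs, blk, ne_comm, eq_comm]
    · simp [hostArcs, blk]
  rw [h, card_union_of_disjoint, card_map, card_erase_of_mem (mem_univ a), card_singleton]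
  · have : 0 < m := a.pos
    rw [Finset.card_univ, Fintype.card_fin]
    omega
  · rw [Finset.disjoint_singleton_right, Finset.mem_map]
    erw [Function.Embedding.coeFn_mk]
    simp

lemma outDeg_u {m : ℕ} : outDeg (hostArcs m) (Sum.inr (Sum.inr ())) = 2 * m := by
  unfold outDeg
  have h : (univ.filter fun w => hostArcs m (Sum.inr (Sum.inr ())) w) =
      univ.erase (Sum.inr (Sum.inr ())) := by
    ext w
    rcases w with b | b | b <;> simp [hostArcs, blk, ne_comm]
  rw [h, card_erase_of_mem (mem_univ _)]
  rw [Finset.card_univ]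
  simp
  omega

lemma blk_eq_two_iff {m : ℕ} (v : Fin m ⊕ Fin m ⊕ Unit) :
    blk v = 2 ↔ v = Sum.inr (Sum.inr ()) := by
  rcases v with a | a | a <;> simp [blk]

lemma card_blk_fiber {m : ℕ} (c : Fin 3) (hc : c ≠ 2) :
    ((univ : Finset (Fin m ⊕ Fin m ⊕ Unit)).filter fun v => blk v = c).card = m := by
  have hc01 : c = 0 ∨ c = 1 := by revert hc; revert c; decide
  rcases hc01 with rfl | rfl
  · rw [show ((univ : Finset (Fin m ⊕ Fin m ⊕ Unit)).filter fun v => blk v = 0) =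
        univ.map ⟨Sum.inl, Sum.inl_injective⟩ from by
      ext v; rcases v with a | a | a <;> simp only [Finset.mem_filter, Finset.mem_univ, true_and, Finset.mem_map, Function.Embedding.coeFn_mk] <;> simp [blk]]
    simp
  · rw [show ((univ : Finset (Fin m ⊕ Fin m ⊕ Unit)).filter fun v => blk v = 1) =
        univ.map ⟨fun b => Sum.inr (Sum.inl b), fun x y h => by simpa using h⟩ from by
      ext v; rcases v with a | a | a <;> simp only [Finset.mem_filter, Finset.mem_univ, true_and, Finset.mem_map] <;> erw [Function.Embedding.coeFn_mk] <;> simp [blk]]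
    simp

lemma mem01 (c : Fin 3) (h : c ≠ 2) : c ∈ ({0, 1} : Finset (Fin 3)) := by
  revert h; revert c; decide

/-- **Claim (extremal example, digraph version).** For `6 ∣ k`, `k ≥ 6`, the
bidirected digraph `D` on two cliques of size `k/2` plus a universal vertex has
minimum semidegree exactly `k/2` and `Δ±(D) = k`, yet contains no orientation of
the spider `Sₖ` (centre with three pendant paths of `k/3` edges each). -/
theorem extremal_digraph_spider
    (k : ℕ) (hk : 6 ≤ k) (hdvd : 6 ∣ k) :
    ((∀ v, k / 2 ≤ outDeg (hostArcs (k / 2)) v ∧ k / 2 ≤ inDeg (hostArcs (k / 2)) v) ∧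
      (∃ v, outDeg (hostArcs (k / 2)) v = k / 2 ∧ inDeg (hostArcs (k / 2)) v = k / 2)) ∧
    ((∀ v, outDeg (hostArcs (k / 2)) v ≤ k ∧ inDeg (hostArcs (k / 2)) v ≤ k) ∧
      (∃ v, outDeg (hostArcs (k / 2)) v = k) ∧ (∃ v, inDeg (hostArcs (k / 2)) v = k)) ∧
    (∀ B : Option (Fin 3 × Fin (k / 3)) → Option (Fin 3 × Fin (k / 3)) → Prop,
      (∀ x y, (B x y ∨ B y x) ↔ spiderAdj (k / 3) x y) →
      (∀ x y, ¬ (B x y ∧ B y x)) →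
      ¬ Contains B (hostArcs (k / 2))) := by
  have hdegs : ∀ v, outDeg (hostArcs (k / 2)) v = k / 2 ∨
      outDeg (hostArcs (k / 2)) v = 2 * (k / 2) := by
    rintro (a | a | a)
    · exact Or.inl (outDeg_inl a)
    · exact Or.inl (outDeg_inr a)
    · cases a
      exact Or.inr outDeg_u
  refine ⟨⟨fun v => ?_, ?_⟩, ⟨fun v => ?_, ?_, ?_⟩, ?_⟩
  · rw [inDeg_eq_outDeg]
    rcases hdegs v with h | h <;> omega
  · refine ⟨Sum.inl ⟨0, by omega⟩, outDeg_inl _, ?_⟩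
    rw [inDeg_eq_outDeg]; exact outDeg_inl _
  · rw [inDeg_eq_outDeg]
    rcases hdegs v with h | h <;> omega
  · refine ⟨Sum.inr (Sum.inr ()), ?_⟩
    rw [outDeg_u]; omega
  · refine ⟨Sum.inr (Sum.inr ()), ?_⟩
    rw [inDeg_eq_outDeg, outDeg_u]; omega
  -- the spider part
  rintro B hB hB2 ⟨f, hinj, hmap⟩
  have hbij : Function.Bijective f := by
    rw [Fintype.bijective_iff_injective_and_card]
    refine ⟨hinj, ?_⟩
    simp only [Fintype.card_option, Fintype.card_prod, Fintype.card_sum, Fintype.card_fin,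
      Fintype.card_unit]
    omega
  obtain ⟨w₀, hw₀⟩ := hbij.surjective (Sum.inr (Sum.inr ()))
  have key : ∀ x y, spiderAdj (k / 3) x y → x ≠ w₀ → y ≠ w₀ → blk (f x) = blk (f y) := by
    intro x y hxy hx hy
    have hfx : blk (f x) ≠ 2 := fun h =>
      hx (hinj (((blk_eq_two_iff _).1 h).trans hw₀.symm))
    have hfy : blk (f y) ≠ 2 := fun h =>
      hy (hinj (((blk_eq_two_iff _).1 h).trans hw₀.symm))
    rcases (hB x y).2 hxy with h | h
    · rcases (hmap _ _ h).2 with h' | h' | h' <;> tauto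
    · rcases (hmap _ _ h).2 with h' | h' | h' <;> first | exact h'.symm | tauto
  have hpos : 0 < k / 3 := by omega
  have pathconst : ∀ (j : Fin 3),
      (∀ i : Fin (k / 3), (some (j, i) : Option (Fin 3 × Fin (k / 3))) ≠ w₀) →
      ∀ i : Fin (k / 3), blk (f (some (j, i))) = blk (f (some (j, ⟨0, hpos⟩))) := by
    intro j hj i
    suffices H : ∀ n (hn : n < k / 3),
        blk (f (some (j, ⟨n, hn⟩))) = blk (f (some (j, ⟨0, hpos⟩))) by
      obtain ⟨n, hn⟩ := i
      exact H n hn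
    intro n
    induction n with
    | zero => intro hn; rfl
    | succ p ih =>
      intro hn
      have hp : p < k / 3 := by omega
      have adj : spiderAdj (k / 3) (some (j, ⟨p, hp⟩)) (some (j, ⟨p + 1, hn⟩)) :=
        ⟨rfl, Or.inl rfl⟩
      rw [← key _ _ adj (hj _) (hj _)]
      exact ih hp
  rcases w₀ with _ | ⟨j₀, i₀⟩
  · -- centre maps to u
    set b : Fin 3 → Fin 3 := fun j => blk (f (some (j, ⟨0, hpos⟩))) with hbdef
    have hbne2 : ∀ j, b j ≠ 2 := by
      intro j h
      rw [hbdef] at h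
      simp only at h
      rw [blk_eq_two_iff, ← hw₀] at h
      exact Option.some_ne_none _ (hinj h)
    obtain ⟨j₁, -, j₂, -, hne, heq⟩ :=
      Finset.exists_ne_map_eq_of_card_lt_of_maps_to
        (s := (univ : Finset (Fin 3))) (t := ({0, 1} : Finset (Fin 3)))
        (by simp) (fun j _ => mem01 _ (hbne2 j))
    set S : Finset (Option (Fin 3 × Fin (k / 3))) :=
      (univ.image fun i : Fin (k / 3) => (some (j₁, i) : Option (Fin 3 × Fin (k / 3)))) ∪
      (univ.image fun i : Fin (k / 3) => (some (j₂, i) : Option (Fin 3 × Fin (k / 3)))) with hSdef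
    have hScard : S.card = 2 * (k / 3) := by
      rw [hSdef, card_union_of_disjoint, card_image_of_injective _ (fun x y h => by simpa using h),
        card_image_of_injective _ (fun x y h => by simpa using h)]
      · simp [card_univ]; omega
      · simp only [disjoint_left, mem_image]
        rintro x ⟨i, -, rfl⟩ ⟨i', -, h⟩
        simp only [Option.some.injEq, Prod.mk.injEq] at h
        exact hne h.1.symm
    have hmaps : ∀ a ∈ S, f a ∈ (univ : Finset (Fin (k / 2) ⊕ Fin (k / 2) ⊕ Unit)).filter
        fun v => blk v = b j₁ := by
      intro a ha
      simp only [hSdef, mem_union, mem_image] at ha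
      simp only [mem_filter, mem_univ, true_and]
      rcases ha with ⟨i, -, rfl⟩ | ⟨i, -, rfl⟩
      · exact pathconst j₁ (fun i => Option.some_ne_none _) i
      · rw [pathconst j₂ (fun i => Option.some_ne_none _) i]
        exact heq.symm
    have hle := Finset.card_le_card_of_injOn f hmaps (hinj.injOn)
    rw [hScard, card_blk_fiber _ (hbne2 j₁)] at hle
    omega
  · -- a path vertex maps to u
    have hex : ∀ j : Fin 3, ∃ j₁ j₂ : Fin 3, j₁ ≠ j₂ ∧ j₁ ≠ j ∧ j₂ ≠ j := by decide
    obtain ⟨j₁, j₂, hne, h1, h2⟩ := hex j₀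
    have hcent : (none : Option (Fin 3 × Fin (k / 3))) ≠ some (j₀, i₀) :=
      fun h => Option.some_ne_none _ h.symm
    have hj : ∀ j : Fin 3, j ≠ j₀ → ∀ i : Fin (k / 3),
        (some (j, i) : Option (Fin 3 × Fin (k / 3))) ≠ some (j₀, i₀) := by
      intro j hjne i h
      have h' := Option.some_injective _ h
      exact hjne (congrArg Prod.fst h')
    have hstep : ∀ j : Fin 3, j ≠ j₀ →
        blk (f (some (j, ⟨0, hpos⟩))) = blk (f none) := by
      intro j hjne
      have adj : spiderAdj (k / 3) (none : Option (Fin 3 × Fin (k / 3)))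
          (some (j, ⟨0, hpos⟩)) := rfl
      exact (key _ _ adj hcent (hj j hjne _)).symm
    have hbne2 : blk (f none) ≠ 2 := fun h =>
      hcent (hinj (((blk_eq_two_iff _).1 h).trans hw₀.symm))
    set S : Finset (Option (Fin 3 × Fin (k / 3))) :=
      insert none
      ((univ.image fun i : Fin (k / 3) => (some (j₁, i) : Option (Fin 3 × Fin (k / 3)))) ∪
       (univ.image fun i : Fin (k / 3) => (some (j₂, i) : Option (Fin 3 × Fin (k / 3))))) with hSdef
    have hScard : S.card = 2 * (k / 3) + 1 := by
      rw [hSdef, card_insert_of_notMem, card_union_of_disjoint,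
        card_image_of_injective _ (fun x y h => by simpa using h),
        card_image_of_injective _ (fun x y h => by simpa using h)]
      · simp [card_univ]; omega
      · simp only [disjoint_left, mem_image]
        rintro x ⟨i, -, rfl⟩ ⟨i', -, h⟩
        simp only [Option.some.injEq, Prod.mk.injEq] at h
        exact hne h.1.symm
      · simp
    have hmaps : ∀ a ∈ S, f a ∈ (univ : Finset (Fin (k / 2) ⊕ Fin (k / 2) ⊕ Unit)).filter
        fun v => blk v = blk (f none) := by
      intro a ha
      simp only [hSdef, mem_insert, mem_union, mem_image] at ha
      simp only [mem_filter, mem_univ, true_and]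
      rcases ha with rfl | ⟨i, -, rfl⟩ | ⟨i, -, rfl⟩
      · rfl
      · rw [pathconst j₁ (hj j₁ h1) i]; exact hstep j₁ h1
      · rw [pathconst j₂ (hj j₂ h2) i]; exact hstep j₂ h2
    have hle := Finset.card_le_card_of_injOn f hmaps (hinj.injOn)
    rw [hScard, card_blk_fiber _ hbne2] at hle
    omega
end
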